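/- Let M be the Coxeter matrix on the set {1, 2, 3} with M(1,2) = ∞ (encoded as 0), M(2,3) = ∞ (encoded as 0), and M(1,3) = 2. Then the Poincaré series W(t) = ∑_{k≥0} c_k t^k of the Coxeter group W(M) satisfies (1 − t − t²) · W(t) = (1+t)² in ℤ⟦t⟧. -/

import Mathlib

open PowerSeries

/-- The Coxeter matrix on {1, …, 3} with M(1,2) = ∞, M(2,3) = ∞ (encoded as 0) and M(1,3) = 2. -/
def cox13 : CoxeterMatrix (Fin 3) where
  M := !![1,0,2; 0,1,0; 2,0,1]
  off_diagonal := by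
    intro i i' h
    fin_cases i <;> fin_cases i' <;> simp_all

/-- The Poincaré series `W(t) = ∑ₖ cₖ tᵏ` of the Coxeter group of `cox13`, where `cₖ` is the
number of elements of length `k`. -/
noncomputable def poincare13 : PowerSeries ℤ :=
  PowerSeries.mk fun k =>
    (Nat.card {w : cox13.Group // cox13.toCoxeterSystem.length w = k} : ℤ)


namespace Cox13

inductive L : Type | A1 | A3 | A13 | Bb
deriving DecidableEq

open L

def isB : L → Bool | Bb => true | _ => false
def wt : L → ℕ | A13 => 2 | _ => 1

@[simp] lemma isB_A1 : isB A1 = false := rfl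
@[simp] lemma isB_A3 : isB A3 = false := rfl
@[simp] lemma isB_A13 : isB A13 = false := rfl
@[simp] lemma isB_Bb : isB Bb = true := rfl
@[simp] lemma wt_A1 : wt A1 = 1 := rfl
@[simp] lemma wt_A3 : wt A3 = 1 := rfl
@[simp] lemma wt_A13 : wt A13 = 2 := rfl
@[simp] lemma wt_Bb : wt Bb = 1 := rfl

def Alt (l : List L) : Prop := List.Chain' (fun x y => isB x ≠ isB y) l

def wlen (l : List L) : ℕ := (l.map wt).sum

@[simp] lemma wlen_nil : wlen [] = 0 := rfl
@[simp] lemma wlen_cons (x : L) (t : List L) : wlen (x :: t) = wt x + wlen t := rfl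

@[simp] lemma alt_nil : Alt [] := List.isChain_nil
@[simp] lemma alt_singleton (x : L) : Alt [x] := List.isChain_singleton x

lemma alt_cons_cons {x y : L} {t : List L} :
    Alt (x :: y :: t) ↔ (isB x ≠ isB y) ∧ Alt (y :: t) := List.isChain_cons_cons

lemma alt_tail {x : L} {t : List L} (h : Alt (x :: t)) : Alt t := h.tail

lemma isB_eq_true {y : L} (h : isB y = true) : y = Bb := by cases y <;> simp_all [isB]

lemma tail_shape_A {x : L} {t : List L} (h : Alt (x :: t)) (hx : isB x = false) :
    t = [] ∨ ∃ u, t = Bb :: u := by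
  cases t with
  | nil => exact Or.inl rfl
  | cons y u =>
    right
    rcases alt_cons_cons.mp h with ⟨hr, -⟩
    refine ⟨u, ?_⟩
    have : isB y = true := by
      cases hy : isB y
      · simp [hx, hy] at hr
      · rfl
    rw [isB_eq_true this]

lemma tail_shape_B {t : List L} (h : Alt (Bb :: t)) :
    t = [] ∨ ∃ y u, t = y :: u ∧ isB y = false := by
  cases t with
  | nil => exact Or.inl rfl
  | cons y u =>
    right
    rcases alt_cons_cons.mp h with ⟨hr, -⟩
    refine ⟨y, u, rfl, ?_⟩
    by_contra hy
    simp only [Bool.not_eq_false] at hy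
    simp [hy] at hr

def m1 : List L → List L
  | [] => [A1]
  | A1 :: t => t
  | A3 :: t => A13 :: t
  | A13 :: t => A3 :: t
  | Bb :: t => A1 :: Bb :: t

def m3 : List L → List L
  | [] => [A3]
  | A3 :: t => t
  | A1 :: t => A13 :: t
  | A13 :: t => A1 :: t
  | Bb :: t => A3 :: Bb :: t

def m2 : List L → List L
  | Bb :: t => t
  | l => Bb :: l

lemma alt_m1 {l : List L} (h : Alt l) : Alt (m1 l) := by
  match l with
  | [] => simp [m1]
  | A1 :: t => exact h.tail
  | A3 :: t => cases t with
    | nil => simp [m1]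
    | cons y u => exact alt_cons_cons.mpr ⟨(alt_cons_cons.mp h).1, (alt_cons_cons.mp h).2⟩
  | A13 :: t => cases t with
    | nil => simp [m1]
    | cons y u => exact alt_cons_cons.mpr ⟨(alt_cons_cons.mp h).1, (alt_cons_cons.mp h).2⟩
  | Bb :: t => exact alt_cons_cons.mpr ⟨by simp [isB], h⟩

lemma alt_m3 {l : List L} (h : Alt l) : Alt (m3 l) := by
  match l with
  | [] => simp [m3]
  | A3 :: t => exact h.tail
  | A1 :: t => cases t with
    | nil => simp [m3]
    | cons y u => exact alt_cons_cons.mpr ⟨(alt_cons_cons.mp h).1, (alt_cons_cons.mp h).2⟩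
  | A13 :: t => cases t with
    | nil => simp [m3]
    | cons y u => exact alt_cons_cons.mpr ⟨(alt_cons_cons.mp h).1, (alt_cons_cons.mp h).2⟩
  | Bb :: t => exact alt_cons_cons.mpr ⟨by simp [isB], h⟩

lemma alt_m2 {l : List L} (h : Alt l) : Alt (m2 l) := by
  match l with
  | [] => simp [m2]
  | Bb :: t => exact h.tail
  | A1 :: t => exact alt_cons_cons.mpr ⟨by simp [isB], h⟩
  | A3 :: t => exact alt_cons_cons.mpr ⟨by simp [isB], h⟩
  | A13 :: t => exact alt_cons_cons.mpr ⟨by simp [isB], h⟩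

lemma m1_m1 {l : List L} (h : Alt l) : m1 (m1 l) = l := by
  match l with
  | [] => rfl
  | A1 :: t =>
    rcases tail_shape_A h rfl with rfl | ⟨u, rfl⟩ <;> rfl
  | A3 :: t => rfl
  | A13 :: t => rfl
  | Bb :: t => rfl

lemma m3_m3 {l : List L} (h : Alt l) : m3 (m3 l) = l := by
  match l with
  | [] => rfl
  | A3 :: t =>
    rcases tail_shape_A h rfl with rfl | ⟨u, rfl⟩ <;> rfl
  | A1 :: t => rfl
  | A13 :: t => rfl
  | Bb :: t => rfl

lemma m2_m2 {l : List L} (h : Alt l) : m2 (m2 l) = l := by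
  match l with
  | [] => rfl
  | Bb :: t =>
    rcases tail_shape_B h with rfl | ⟨y, u, rfl, hy⟩
    · rfl
    · cases y <;> simp_all [isB, m2]
  | A1 :: t => rfl
  | A3 :: t => rfl
  | A13 :: t => rfl

lemma m1_m3 {l : List L} (h : Alt l) : m1 (m3 l) = m3 (m1 l) := by
  match l with
  | [] => rfl
  | A1 :: t =>
    rcases tail_shape_A h rfl with rfl | ⟨u, rfl⟩ <;> rfl
  | A3 :: t =>
    rcases tail_shape_A h rfl with rfl | ⟨u, rfl⟩ <;> rfl
  | A13 :: t => rfl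
  | Bb :: t => rfl



lemma wlen_m1_le (l : List L) : wlen (m1 l) ≤ wlen l + 1 := by
  match l with
  | [] => simp [m1]
  | A1 :: t => simp [m1]; omega
  | A3 :: t => simp [m1]; omega
  | A13 :: t => simp [m1]; omega
  | Bb :: t => simp [m1]; omega

lemma wlen_m3_le (l : List L) : wlen (m3 l) ≤ wlen l + 1 := by
  match l with
  | [] => simp [m3]
  | A3 :: t => simp [m3]; omega
  | A1 :: t => simp [m3]; omega
  | A13 :: t => simp [m3]; omega
  | Bb :: t => simp [m3]; omega

lemma wlen_m2_le (l : List L) : wlen (m2 l) ≤ wlen l + 1 := by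
  match l with
  | [] => simp [m2]
  | Bb :: t => simp [m2]; omega
  | A1 :: t => simp [m2]; omega
  | A3 :: t => simp [m2]; omega
  | A13 :: t => simp [m2]; omega

abbrev NF := {l : List L // Alt l}

def p1 : Equiv.Perm NF :=
  Function.Involutive.toPerm (fun l => ⟨m1 l.1, alt_m1 l.2⟩)
    (fun l => Subtype.ext (m1_m1 l.2))

def p3 : Equiv.Perm NF :=
  Function.Involutive.toPerm (fun l => ⟨m3 l.1, alt_m3 l.2⟩)
    (fun l => Subtype.ext (m3_m3 l.2))

def p2 : Equiv.Perm NF :=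
  Function.Involutive.toPerm (fun l => ⟨m2 l.1, alt_m2 l.2⟩)
    (fun l => Subtype.ext (m2_m2 l.2))

@[simp] lemma p1_apply (l : NF) : (p1 l).1 = m1 l.1 := rfl
@[simp] lemma p3_apply (l : NF) : (p3 l).1 = m3 l.1 := rfl
@[simp] lemma p2_apply (l : NF) : (p2 l).1 = m2 l.1 := rfl

lemma p1_p1 (l : NF) : p1 (p1 l) = l := Subtype.ext (m1_m1 l.2)
lemma p3_p3 (l : NF) : p3 (p3 l) = l := Subtype.ext (m3_m3 l.2)
lemma p2_p2 (l : NF) : p2 (p2 l) = l := Subtype.ext (m2_m2 l.2)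
lemma p1_p3 (l : NF) : p1 (p3 l) = p3 (p1 l) := by
  apply Subtype.ext
  simpa using m1_m3 l.2

lemma sq13 : (p1 * p3) ^ 2 = 1 := by
  rw [sq]
  ext l
  simp only [Equiv.Perm.coe_mul, Function.comp_apply, Equiv.Perm.coe_one, id_eq]
  rw [← p1_p3, p1_p1, p3_p3]

lemma sq31 : (p3 * p1) ^ 2 = 1 := by
  rw [sq]
  ext l
  simp only [Equiv.Perm.coe_mul, Function.comp_apply, Equiv.Perm.coe_one, id_eq]
  rw [p1_p3, p3_p3, p1_p1]

lemma sq1 : p1 * p1 = 1 := by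
  apply Equiv.ext; intro l
  show p1 (p1 l) = l
  exact p1_p1 l

lemma sq2 : p2 * p2 = 1 := by
  apply Equiv.ext; intro l
  show p2 (p2 l) = l
  exact p2_p2 l

lemma sq3 : p3 * p3 = 1 := by
  apply Equiv.ext; intro l
  show p3 (p3 l) = l
  exact p3_p3 l

def fvec : Fin 3 → Equiv.Perm NF := ![p1, p2, p3]

lemma liftable : cox13.IsLiftable fvec := by
  intro i i'
  fin_cases i <;> fin_cases i'
  · show (p1 * p1) ^ 1 = 1
    rw [pow_one]; exact sq1
  · show (p1 * p2) ^ 0 = 1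
    exact pow_zero _
  · show (p1 * p3) ^ 2 = 1
    exact sq13
  · show (p2 * p1) ^ 0 = 1
    exact pow_zero _
  · show (p2 * p2) ^ 1 = 1
    rw [pow_one]; exact sq2
  · show (p2 * p3) ^ 0 = 1
    exact pow_zero _
  · show (p3 * p1) ^ 2 = 1
    exact sq31
  · show (p3 * p2) ^ 0 = 1
    exact pow_zero _
  · show (p3 * p3) ^ 1 = 1
    rw [pow_one]; exact sq3

abbrev W := cox13.Group

noncomputable def cs : CoxeterSystem cox13 W := cox13.toCoxeterSystem

noncomputable def φ : W →* Equiv.Perm NF := cs.lift ⟨fvec, liftable⟩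

lemma φ_simple (i : Fin 3) : φ (cs.simple i) = fvec i :=
  cs.lift_apply_simple liftable i

def wL : L → List (Fin 3)
  | A1 => [0]
  | A3 => [2]
  | A13 => [0, 2]
  | Bb => [1]

def word : List L → List (Fin 3)
  | [] => []
  | x :: t => wL x ++ word t

noncomputable def wp (l : List L) : W := cs.wordProd (word l)

@[simp] lemma wp_nil : wp [] = 1 := by simp [wp, word]

lemma word_length (l : List L) : (word l).length = wlen l := by
  induction l with
  | nil => rfl
  | cons x t ih => cases x <;> simp [word, wL, ih] <;> omega

@[simp] lemma wp_A1 (t : List L) : wp (A1 :: t) = cs.simple 0 * wp t := by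
  simp [wp, word, wL, CoxeterSystem.wordProd_append, CoxeterSystem.wordProd_cons]

@[simp] lemma wp_A3 (t : List L) : wp (A3 :: t) = cs.simple 2 * wp t := by
  simp [wp, word, wL, CoxeterSystem.wordProd_append, CoxeterSystem.wordProd_cons]

@[simp] lemma wp_A13 (t : List L) :
    wp (A13 :: t) = cs.simple 0 * (cs.simple 2 * wp t) := by
  simp [wp, word, wL, CoxeterSystem.wordProd_append, CoxeterSystem.wordProd_cons, mul_assoc]

@[simp] lemma wp_Bb (t : List L) : wp (Bb :: t) = cs.simple 1 * wp t := by
  simp [wp, word, wL, CoxeterSystem.wordProd_append, CoxeterSystem.wordProd_cons]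

lemma comm02 : cs.simple 0 * cs.simple 2 = cs.simple 2 * cs.simple 0 := by
  have h : (cs.simple 0 * cs.simple 2) ^ 2 = 1 := cs.simple_mul_simple_pow 0 2
  have h2 : cs.simple 0 * cs.simple 2 = (cs.simple 0 * cs.simple 2)⁻¹ := by
    apply mul_eq_one_iff_eq_inv.mp
    rw [← sq]; exact h
  rw [h2, mul_inv_rev, cs.inv_simple, cs.inv_simple]

lemma genQ (i : Fin 3) (l : NF) : wp ((fvec i) l).1 = cs.simple i * wp l.1 := by
  fin_cases i
  · show wp (m1 l.1) = cs.simple 0 * wp l.1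
    match l.1 with
    | [] => simp [m1]
    | A1 :: t => simp [m1, CoxeterSystem.simple_mul_simple_cancel_left]
    | A3 :: t => simp [m1]
    | A13 :: t => simp [m1, CoxeterSystem.simple_mul_simple_cancel_left]
    | Bb :: t => simp [m1]
  · show wp (m2 l.1) = cs.simple 1 * wp l.1
    match l.1 with
    | [] => simp [m2]
    | Bb :: t => simp [m2, CoxeterSystem.simple_mul_simple_cancel_left]
    | A1 :: t => simp [m2]
    | A3 :: t => simp [m2]
    | A13 :: t => simp [m2]
  · show wp (m3 l.1) = cs.simple 2 * wp l.1
    match l.1 with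
    | [] => simp [m3]
    | A3 :: t => simp [m3, CoxeterSystem.simple_mul_simple_cancel_left]
    | A1 :: t =>
      simp only [m3, wp_A1, wp_A13]
      rw [← mul_assoc, comm02, mul_assoc]
    | A13 :: t =>
      simp only [m3, wp_A1, wp_A13]
      have h : cs.simple 0 * (cs.simple 2 * wp t)
          = cs.simple 2 * (cs.simple 0 * wp t) := by
        rw [← mul_assoc, comm02, mul_assoc]
      rw [h, CoxeterSystem.simple_mul_simple_cancel_left]
    | Bb :: t => simp [m3]

lemma Qlem (w : W) : ∀ l : NF, wp ((φ w) l).1 = w * wp l.1 := by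
  induction w using cs.simple_induction with
  | simple i =>
    intro l
    rw [φ_simple]
    exact genQ i l
  | one => intro l; simp
  | mul u v hu hv =>
    intro l
    rw [map_mul, Equiv.Perm.mul_apply, hu, hv, mul_assoc]

noncomputable def nf (w : W) : NF := φ w ⟨[], alt_nil⟩

lemma wp_nf (w : W) : wp (nf w).1 = w := by
  have := Qlem w ⟨[], alt_nil⟩
  simpa [nf] using this



lemma φ_apply_simple (i : Fin 3) (l : NF) : φ (cs.simple i) l = fvec i l := by
  rw [φ_simple]

lemma nf_wp (l : List L) (h : Alt l) : nf (wp l) = ⟨l, h⟩ := by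
  induction l with
  | nil => simp only [wp_nil, nf, map_one, Equiv.Perm.coe_one, id_eq]
  | cons x t ih =>
    have ht : Alt t := alt_tail h
    cases x with
    | A1 =>
      rw [wp_A1, nf, map_mul, Equiv.Perm.mul_apply]
      have : φ (wp t) ⟨[], alt_nil⟩ = ⟨t, ht⟩ := ih ht
      rw [this, φ_apply_simple]
      apply Subtype.ext
      show m1 t = A1 :: t
      rcases tail_shape_A h rfl with rfl | ⟨u, rfl⟩ <;> rfl
    | A3 =>
      rw [wp_A3, nf, map_mul, Equiv.Perm.mul_apply]
      have : φ (wp t) ⟨[], alt_nil⟩ = ⟨t, ht⟩ := ih ht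
      rw [this, show ((2 : Fin 3) = (2 : Fin 3)) from rfl]
      rw [φ_apply_simple]
      apply Subtype.ext
      show m3 t = A3 :: t
      rcases tail_shape_A h rfl with rfl | ⟨u, rfl⟩ <;> rfl
    | Bb =>
      rw [wp_Bb, nf, map_mul, Equiv.Perm.mul_apply]
      have : φ (wp t) ⟨[], alt_nil⟩ = ⟨t, ht⟩ := ih ht
      rw [this, φ_apply_simple]
      apply Subtype.ext
      show m2 t = Bb :: t
      rcases tail_shape_B h with rfl | ⟨y, u, rfl, hy⟩
      · rfl
      · cases y <;> simp_all [m2]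
    | A13 =>
      rw [wp_A13, nf, map_mul, map_mul, Equiv.Perm.mul_apply, Equiv.Perm.mul_apply]
      have : φ (wp t) ⟨[], alt_nil⟩ = ⟨t, ht⟩ := ih ht
      rw [this, φ_apply_simple, φ_apply_simple]
      have h3 : (fvec 2) ⟨t, ht⟩ = ⟨A3 :: t, by
          have := alt_m3 ht
          have e : m3 t = A3 :: t := by
            rcases tail_shape_A h rfl with rfl | ⟨u, rfl⟩ <;> rfl
          rwa [e] at this⟩ := by
        apply Subtype.ext
        show m3 t = A3 :: t
        rcases tail_shape_A h rfl with rfl | ⟨u, rfl⟩ <;> rfl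
      rw [h3]
      apply Subtype.ext
      show m1 (A3 :: t) = A13 :: t
      rfl

lemma wlen_nf_wordProd_le (ω : List (Fin 3)) :
    wlen (nf (cs.wordProd ω)).1 ≤ ω.length := by
  induction ω with
  | nil => simp [nf, CoxeterSystem.wordProd_nil]
  | cons i ω ih =>
    rw [CoxeterSystem.wordProd_cons]
    have : nf (cs.simple i * cs.wordProd ω) = φ (cs.simple i) (nf (cs.wordProd ω)) := by
      simp only [nf, map_mul, Equiv.Perm.mul_apply]
    rw [this, φ_simple]
    have hlen : (i :: ω).length = ω.length + 1 := rfl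
    rw [hlen]
    fin_cases i
    · exact le_trans (wlen_m1_le _) (by omega)
    · exact le_trans (wlen_m2_le _) (by omega)
    · exact le_trans (wlen_m3_le _) (by omega)

lemma length_eq (w : W) : cs.length w = wlen (nf w).1 := by
  apply le_antisymm
  · conv_lhs => rw [← wp_nf w]
    exact le_trans (cs.length_wordProd_le (word (nf w).1)) (le_of_eq (word_length _))
  · obtain ⟨ω, hlen, hw⟩ := cs.exists_reduced_word w
    calc wlen (nf w).1 = wlen (nf (cs.wordProd ω)).1 := by rw [← hw]
      _ ≤ ω.length := wlen_nf_wordProd_le ω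
      _ = cs.length w := by subst hw; exact Eq.symm hlen

noncomputable def lengthEquiv (k : ℕ) :
    {w : W // cs.length w = k} ≃ {l : List L // Alt l ∧ wlen l = k} where
  toFun w := ⟨(nf w.1).1, (nf w.1).2, by rw [← length_eq]; exact w.2⟩
  invFun l := ⟨wp l.1, by rw [length_eq, nf_wp l.1 l.2.1]; exact l.2.2⟩
  left_inv w := Subtype.ext (wp_nf w.1)
  right_inv l := Subtype.ext (by
    show (nf (wp l.1)).1 = l.1
    rw [nf_wp l.1 l.2.1])

instance : Fintype L :=
  ⟨⟨{A1, A3, A13, Bb}, by decide⟩, fun x => by cases x <;> decide⟩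

lemma length_le_wlen (l : List L) : l.length ≤ wlen l := by
  induction l with
  | nil => simp
  | cons x t ih => cases x <;> simp [ih] <;> omega

lemma finite_sub (P : List L → Prop) (k : ℕ) (hP : ∀ l, P l → wlen l = k) :
    Finite {l : List L // P l} := by
  have : Finite {l : List L // l.length ≤ k} := (List.finite_length_le L k).to_subtype
  refine Finite.of_injective
    (fun x => (⟨x.1, (length_le_wlen x.1).trans (le_of_eq (hP x.1 x.2))⟩ :
      {l : List L // l.length ≤ k})) ?_
  intro x y hxy
  apply Subtype.ext
  simpa [Subtype.mk.injEq] using hxy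



def headB : List L → Bool
  | [] => false
  | x :: _ => isB x

@[simp] lemma headB_nil : headB [] = false := rfl
@[simp] lemma headB_cons (x : L) (t : List L) : headB (x :: t) = isB x := rfl

lemma wlen_eq_zero {l : List L} : wlen l = 0 ↔ l = [] := by
  cases l with
  | nil => simp
  | cons x t => cases x <;> simp

lemma headB_shape {l : List L} (h : headB l = true) : ∃ t, l = Bb :: t := by
  cases l with
  | nil => simp at h
  | cons x t =>
    have hx : x = Bb := isB_eq_true (by simpa using h)
    exact ⟨t, by rw [hx]⟩

lemma alt_B_cons {t : List L} (ht : Alt t) (h : headB t = false) : Alt (Bb :: t) := by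
  cases t with
  | nil => simp
  | cons y u => exact alt_cons_cons.mpr ⟨by simp_all, ht⟩

lemma headB_tail_A {x : L} {t : List L} (hx : isB x = false) (h : Alt (x :: t)) :
    headB t = true ∨ t = [] := by
  rcases tail_shape_A h hx with rfl | ⟨u, rfl⟩
  · exact Or.inr rfl
  · exact Or.inl rfl

lemma headB_tail_B {t : List L} (h : Alt (Bb :: t)) : headB t = false := by
  rcases tail_shape_B h with rfl | ⟨y, u, rfl, hy⟩
  · rfl
  · simpa using hy

lemma alt_A_cons {x : L} {t : List L} (hx : isB x = false) (ht : Alt t)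
    (h : headB t = true ∨ t = []) : Alt (x :: t) := by
  rcases h with h | rfl
  · obtain ⟨u, rfl⟩ := headB_shape h
    exact alt_cons_cons.mpr ⟨by simp [hx], ht⟩
  · simp

noncomputable def nn (k : ℕ) : ℕ := Nat.card {l : List L // Alt l ∧ wlen l = k}
noncomputable def aa (k : ℕ) : ℕ :=
  Nat.card {l : List L // Alt l ∧ wlen l = k ∧ headB l = false}
noncomputable def bb (k : ℕ) : ℕ :=
  Nat.card {l : List L // Alt l ∧ wlen l = k ∧ headB l = true}
noncomputable def ee (k : ℕ) : ℕ :=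
  Nat.card {l : List L // Alt l ∧ wlen l = k ∧ (headB l = true ∨ l = [])}

instance instF1 (k : ℕ) : Finite {l : List L // Alt l ∧ wlen l = k} :=
  finite_sub _ k (fun _ h => h.2)
instance instF2 (k : ℕ) : Finite {l : List L // Alt l ∧ wlen l = k ∧ headB l = false} :=
  finite_sub _ k (fun _ h => h.2.1)
instance instF3 (k : ℕ) : Finite {l : List L // Alt l ∧ wlen l = k ∧ headB l = true} :=
  finite_sub _ k (fun _ h => h.2.1)
instance instF4 (k : ℕ) :
    Finite {l : List L // Alt l ∧ wlen l = k ∧ (headB l = true ∨ l = [])} :=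
  finite_sub _ k (fun _ h => h.2.1)

lemma card_split (P Q : List L → Prop) [DecidablePred Q] (k : ℕ)
    (hP : ∀ l, P l → wlen l = k) :
    Nat.card {l : List L // P l}
      = Nat.card {l : List L // P l ∧ Q l} + Nat.card {l : List L // P l ∧ ¬ Q l} := by
  haveI := finite_sub P k hP
  calc Nat.card {l : List L // P l}
      = Nat.card ({x : {l : List L // P l} // Q x.1} ⊕ {x : {l : List L // P l} // ¬ Q x.1}) :=
        (Nat.card_congr (Equiv.sumCompl fun x : {l : List L // P l} => Q x.1)).symm
    _ = Nat.card {x : {l : List L // P l} // Q x.1}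
          + Nat.card {x : {l : List L // P l} // ¬ Q x.1} := Nat.card_sum
    _ = _ := by
        congr 1
        · exact Nat.card_congr (Equiv.subtypeSubtypeEquivSubtypeInter P Q)
        · exact Nat.card_congr (Equiv.subtypeSubtypeEquivSubtypeInter P (fun l => ¬ Q l))

lemma nn_eq (k : ℕ) : nn k = bb k + aa k := by
  rw [nn, card_split (fun l => Alt l ∧ wlen l = k) (fun l => headB l = true) k
    (fun _ h => h.2)]
  congr 1
  · rw [bb]
    exact Nat.card_congr (Equiv.subtypeEquivRight (fun l => and_assoc))
  · rw [aa]
    exact Nat.card_congr (Equiv.subtypeEquivRight (fun l => by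
      rw [and_assoc]
      simp [Bool.not_eq_true]))

def bEquiv (k : ℕ) :
    {l : List L // Alt l ∧ wlen l = k + 1 ∧ headB l = true} ≃
      {l : List L // Alt l ∧ wlen l = k ∧ headB l = false} where
  toFun x := ⟨x.1.tail, by
    obtain ⟨t, ht⟩ := headB_shape x.2.2.2
    have h2 := x.2
    rw [ht] at h2 ⊢
    refine ⟨alt_tail h2.1, ?_, headB_tail_B h2.1⟩
    have := h2.2.1
    simp only [wlen_cons, wt_Bb, List.tail_cons] at this ⊢
    omega⟩
  invFun y := ⟨Bb :: y.1, alt_B_cons y.2.1 y.2.2.2, by simp [y.2.2.1, Nat.add_comm], rfl⟩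
  left_inv x := Subtype.ext (by
    obtain ⟨t, ht⟩ := headB_shape x.2.2.2
    show Bb :: x.1.tail = x.1
    rw [ht, List.tail_cons])
  right_inv y := Subtype.ext rfl

lemma bb_succ (k : ℕ) : bb (k + 1) = aa k := Nat.card_congr (bEquiv k)

lemma ee_succ (k : ℕ) : ee (k + 1) = bb (k + 1) := by
  apply Nat.card_congr
  apply Equiv.subtypeEquivRight
  intro l
  constructor
  · rintro ⟨h1, h2, h3 | rfl⟩
    · exact ⟨h1, h2, h3⟩
    · simp at h2
  · rintro ⟨h1, h2, h3⟩
    exact ⟨h1, h2, Or.inl h3⟩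

lemma ee_zero : ee 0 = 1 := by
  have hiff : ∀ l : List L, (Alt l ∧ wlen l = 0 ∧ (headB l = true ∨ l = [])) ↔ l = [] := by
    intro l
    constructor
    · rintro ⟨-, h, -⟩; exact wlen_eq_zero.mp h
    · rintro rfl; exact ⟨alt_nil, rfl, Or.inr rfl⟩
  rw [ee, Nat.card_congr (Equiv.subtypeEquivRight hiff)]
  haveI : Unique {l : List L // l = []} := ⟨⟨⟨[], rfl⟩⟩, fun x => Subtype.ext x.2⟩
  exact Nat.card_unique

lemma aa_zero : aa 0 = 1 := by
  have hiff : ∀ l : List L, (Alt l ∧ wlen l = 0 ∧ headB l = false) ↔ l = [] := by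
    intro l
    constructor
    · rintro ⟨-, h, -⟩; exact wlen_eq_zero.mp h
    · rintro rfl; exact ⟨alt_nil, rfl, rfl⟩
  rw [aa, Nat.card_congr (Equiv.subtypeEquivRight hiff)]
  haveI : Unique {l : List L // l = []} := ⟨⟨⟨[], rfl⟩⟩, fun x => Subtype.ext x.2⟩
  exact Nat.card_unique

lemma aa_mem_one {l : List L} (h : Alt l ∧ wlen l = 1 ∧ headB l = false) :
    l = [A1] ∨ l = [A3] := by
  rcases l with - | ⟨x, t⟩
  · simp at h
  · have hw := h.2.1
    have hB := h.2.2
    cases x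
    · left
      have : wlen t = 0 := by simpa using hw
      rw [wlen_eq_zero.mp this]
    · right
      have : wlen t = 0 := by simpa using hw
      rw [wlen_eq_zero.mp this]
    · exfalso; simp [wlen] at hw; omega
    · exfalso; simp at hB

def aOneEquiv : {l : List L // Alt l ∧ wlen l = 1 ∧ headB l = false} ≃ Bool where
  toFun x := decide (x.1 = [A3])
  invFun b := if b then ⟨[A3], by simp⟩ else ⟨[A1], by simp⟩
  left_inv x := by
    rcases x with ⟨l, hl⟩
    rcases aa_mem_one hl with rfl | rfl <;> rfl
  right_inv b := by cases b <;> rfl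

lemma aa_one : aa 1 = 2 := by
  rw [aa, Nat.card_congr aOneEquiv]
  simp [Nat.card_eq_fintype_card]

lemma cons_of_head? {l : List L} {x : L} (h : l.head? = some x) : l = x :: l.tail := by
  cases l <;> simp_all

lemma head_A13 {l : List L} (hne : l ≠ []) (hB : headB l = false)
    (h1 : l.head? ≠ some A1) (h3 : l.head? ≠ some A3) : l = A13 :: l.tail := by
  cases l with
  | nil => exact absurd rfl hne
  | cons x t => cases x <;> simp_all

def tailEquivA1 (k : ℕ) :
    {l : List L // (Alt l ∧ wlen l = k + 2 ∧ headB l = false) ∧ l.head? = some A1} ≃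
      {l : List L // Alt l ∧ wlen l = k + 1 ∧ (headB l = true ∨ l = [])} where
  toFun x := ⟨x.1.tail, by
    have hc := cons_of_head? x.2.2
    have h2 := x.2.1
    rw [hc] at h2
    refine ⟨alt_tail h2.1, ?_, headB_tail_A (by simp) h2.1⟩
    have := h2.2.1
    simp only [wlen_cons, wt_A1] at this
    omega⟩
  invFun z := ⟨A1 :: z.1, ⟨alt_A_cons (by simp) z.2.1 z.2.2.2,
    by simp only [wlen_cons, wt_A1, z.2.2.1]; omega, rfl⟩, rfl⟩
  left_inv x := Subtype.ext (cons_of_head? x.2.2).symm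
  right_inv z := Subtype.ext rfl

def tailEquivA3 (k : ℕ) :
    {l : List L // ((Alt l ∧ wlen l = k + 2 ∧ headB l = false) ∧ ¬ l.head? = some A1)
        ∧ l.head? = some A3} ≃
      {l : List L // Alt l ∧ wlen l = k + 1 ∧ (headB l = true ∨ l = [])} where
  toFun x := ⟨x.1.tail, by
    have hc := cons_of_head? x.2.2
    have h2 := x.2.1.1
    rw [hc] at h2
    refine ⟨alt_tail h2.1, ?_, headB_tail_A (by simp) h2.1⟩
    have := h2.2.1
    simp only [wlen_cons, wt_A3] at this
    omega⟩
  invFun z := ⟨A3 :: z.1, ⟨⟨alt_A_cons (by simp) z.2.1 z.2.2.2,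
    by simp only [wlen_cons, wt_A3, z.2.2.1]; omega, rfl⟩, by simp⟩, rfl⟩
  left_inv x := Subtype.ext (cons_of_head? x.2.2).symm
  right_inv z := Subtype.ext rfl

def tailEquivA13 (k : ℕ) :
    {l : List L // ((Alt l ∧ wlen l = k + 2 ∧ headB l = false) ∧ ¬ l.head? = some A1)
        ∧ ¬ l.head? = some A3} ≃
      {l : List L // Alt l ∧ wlen l = k ∧ (headB l = true ∨ l = [])} where
  toFun x := ⟨x.1.tail, by
    have hne : x.1 ≠ [] := by
      intro h
      have := x.2.1.1.2.1
      rw [h] at this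
      simp at this
    have hc := head_A13 hne x.2.1.1.2.2 x.2.1.2 x.2.2
    have h2 := x.2.1.1
    rw [hc] at h2
    refine ⟨alt_tail h2.1, ?_, headB_tail_A (by simp) h2.1⟩
    have := h2.2.1
    simp only [wlen_cons, wt_A13] at this
    omega⟩
  invFun z := ⟨A13 :: z.1, ⟨⟨alt_A_cons (by simp) z.2.1 z.2.2.2,
    by simp only [wlen_cons, wt_A13, z.2.2.1]; omega, rfl⟩, by simp⟩, by simp⟩
  left_inv x := Subtype.ext (by
    have hne : x.1 ≠ [] := by
      intro h
      have := x.2.1.1.2.1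
      rw [h] at this
      simp at this
    exact (head_A13 hne x.2.1.1.2.2 x.2.1.2 x.2.2).symm)
  right_inv z := Subtype.ext rfl

lemma aa_two_rec (k : ℕ) : aa (k + 2) = ee (k + 1) + (ee (k + 1) + ee k) := by
  rw [aa, card_split (fun l => Alt l ∧ wlen l = k + 2 ∧ headB l = false)
    (fun l => l.head? = some A1) (k + 2) (fun _ h => h.2.1)]
  congr 1
  · rw [ee]
    exact Nat.card_congr (tailEquivA1 k)
  · rw [card_split (fun l => (Alt l ∧ wlen l = k + 2 ∧ headB l = false) ∧ ¬ l.head? = some A1)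
      (fun l => l.head? = some A3) (k + 2) (fun _ h => h.1.2.1)]
    congr 1
    · rw [ee]
      exact Nat.card_congr (tailEquivA3 k)
    · rw [ee]
      exact Nat.card_congr (tailEquivA13 k)

lemma aa_rec (k : ℕ) : aa (k + 3) = 2 * aa (k + 1) + aa k := by
  have h : aa (k + 3) = ee (k + 2) + (ee (k + 2) + ee (k + 1)) := aa_two_rec (k + 1)
  have e1 : ee (k + 2) = bb (k + 2) := ee_succ (k + 1)
  have e2 : ee (k + 1) = bb (k + 1) := ee_succ k
  have e3 : bb (k + 2) = aa (k + 1) := bb_succ (k + 1)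
  have e4 : bb (k + 1) = aa k := bb_succ k
  omega

lemma nn0 : nn 0 = 1 := by
  have h := nn_eq 0
  have := aa_zero
  have : bb 0 = 0 := by
    haveI : IsEmpty {l : List L // Alt l ∧ wlen l = 0 ∧ headB l = true} := ⟨fun x => by
      have h0 := wlen_eq_zero.mp x.2.2.1
      have h1 := x.2.2.2
      rw [h0] at h1
      simp at h1⟩
    rw [bb]
    exact Nat.card_of_isEmpty
  omega

lemma nn1 : nn 1 = 3 := by
  have h : nn 1 = bb 1 + aa 1 := nn_eq 1
  have e1 : bb 1 = aa 0 := bb_succ 0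
  have := aa_zero
  have := aa_one
  omega

lemma aa_two : aa 2 = 3 := by
  have h : aa 2 = ee 1 + (ee 1 + ee 0) := aa_two_rec 0
  have e1 : ee 1 = bb 1 := ee_succ 0
  have e2 : bb 1 = aa 0 := bb_succ 0
  have := ee_zero
  have := aa_zero
  omega

lemma nn2 : nn 2 = 5 := by
  have h : nn 2 = bb 2 + aa 2 := nn_eq 2
  have e1 : bb 2 = aa 1 := bb_succ 1
  have := aa_one
  have := aa_two
  omega

lemma nnrec (k : ℕ) : nn (k + 3) = nn (k + 2) + nn (k + 1) := by
  have h1 : nn (k + 3) = bb (k + 3) + aa (k + 3) := nn_eq (k + 3)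
  have h2 : nn (k + 2) = bb (k + 2) + aa (k + 2) := nn_eq (k + 2)
  have h3 : nn (k + 1) = bb (k + 1) + aa (k + 1) := nn_eq (k + 1)
  have h4 : aa (k + 3) = 2 * aa (k + 1) + aa k := aa_rec k
  have h5 : bb (k + 3) = aa (k + 2) := bb_succ (k + 2)
  have h6 : bb (k + 2) = aa (k + 1) := bb_succ (k + 1)
  have h7 : bb (k + 1) = aa k := bb_succ k
  omega

end Cox13


theorem stmt_13 :
    (1 - X - X ^ 2) * poincare13 =
      (1 + X) ^ 2 := by
  have key : ∀ k, Nat.card {w : cox13.Group // cox13.toCoxeterSystem.length w = k}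
      = Cox13.nn k := fun k => Nat.card_congr (Cox13.lengthEquiv k)
  have h1 : (1 - X - X ^ 2 : ℤ⟦X⟧) * poincare13
      = poincare13 - poincare13 * X ^ 1 - poincare13 * X ^ 2 := by ring
  have h2 : ((1 + X : ℤ⟦X⟧)) ^ 2 = 1 + X + X + X ^ 2 := by ring
  rw [h1, h2]
  ext n
  rw [map_sub, map_sub, map_add, map_add, map_add]
  rw [PowerSeries.coeff_mul_X_pow', PowerSeries.coeff_mul_X_pow']
  simp only [poincare13, PowerSeries.coeff_mk, PowerSeries.coeff_one,
    PowerSeries.coeff_X, PowerSeries.coeff_X_pow, key]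
  rcases n with _ | _ | _ | n
  · norm_num [Cox13.nn0]
  · norm_num [Cox13.nn0, Cox13.nn1]
  · norm_num [Cox13.nn0, Cox13.nn1, Cox13.nn2]
  · have h := Cox13.nnrec n
    have c1 : ¬ (n + 3 = 0) := by omega
    have c2 : ¬ (n + 3 = 1) := by omega
    have c3 : ¬ (n + 3 = 2) := by omega
    have c4 : (1 : ℕ) ≤ n + 3 := by omega
    have c5 : (2 : ℕ) ≤ n + 3 := by omega
    simp only [if_pos c4, if_pos c5, if_neg c1, if_neg c2, if_neg c3]
    have e1 : n + 3 - 1 = n + 2 := by omega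
    have e2 : n + 3 - 2 = n + 1 := by omega
    rw [e1, e2, h]
    push_cast
    ring
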